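/- arXiv:2604.03101 — 4 statements merged into one kernel-verified Lean document; each statement's English description precedes it below -/
import Mathlib

section
/- Let Γ(R) be the zero-divisor graph of R = 𝔽_p[x]/(x^{2b}) with b ≥ 1. The clique number of Γ(R) equals p^b − 1. -/
open Polynomial

noncomputable section

/-- The truncated polynomial ring `𝔽_p[x]/(x^c)`. -/
abbrev TPR (p c : ℕ) : Type := AdjoinRoot (X ^ c : (ZMod p)[X])

instance (p c : ℕ) [Fact p.Prime] : Finite (TPR p c) := by
  have hb : PowerBasis (ZMod p) (TPR p c) :=
    AdjoinRoot.powerBasis (pow_ne_zero c Polynomial.X_ne_zero)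
  have : Module.Finite (ZMod p) (TPR p c) := Module.Finite.of_basis hb.basis
  exact Module.finite_of_finite (ZMod p)

/-- The canonical representative (the unique representative of degree `< c`)
of an element of `𝔽_p[x]/(x^c)`. -/
def canon {p c : ℕ} (f : TPR p c) : (ZMod p)[X] :=
  Function.surjInv (AdjoinRoot.mk_surjective (g := (X ^ c : (ZMod p)[X]))) f %ₘ X ^ c

/-- The minimal degree: the least exponent with nonzero coefficient in the
canonical representative. -/
def mindeg {p c : ℕ} (f : TPR p c) : ℕ := (canon f).natTrailingDegree

section Helper

variable {p c : ℕ} [Fact p.Prime]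

lemma mk_canon (f : TPR p c) : AdjoinRoot.mk (X ^ c : (ZMod p)[X]) (canon f) = f := by
  have h1 : AdjoinRoot.mk (X ^ c : (ZMod p)[X])
      (Function.surjInv (AdjoinRoot.mk_surjective (g := (X ^ c : (ZMod p)[X]))) f) = f :=
    Function.surjInv_eq _ f
  conv_rhs => rw [← h1]
  rw [canon, AdjoinRoot.mk_eq_mk, modByMonic_eq_sub_mul_div _ (X ^ c)]
  exact ⟨-(_ /ₘ X ^ c), by ring⟩

lemma degree_canon (f : TPR p c) : (canon f).degree < c := by
  have := degree_modByMonic_lt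
    (Function.surjInv (AdjoinRoot.mk_surjective (g := (X ^ c : (ZMod p)[X]))) f)
    (monic_X_pow (R := ZMod p) c)
  rwa [degree_X_pow] at this

lemma canon_ne_zero {f : TPR p c} (hf : f ≠ 0) : canon f ≠ 0 := by
  intro h
  apply hf
  rw [← mk_canon f, h, map_zero]

lemma X_pow_dvd_iff_le {F : (ZMod p)[X]} (hF : F ≠ 0) {n : ℕ} :
    X ^ n ∣ F ↔ n ≤ F.natTrailingDegree := by
  rw [X_pow_dvd_iff]
  constructor
  · intro h
    exact le_natTrailingDegree hF h
  · intro h d hd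
    exact coeff_eq_zero_of_lt_natTrailingDegree (lt_of_lt_of_le hd h)

def annSet (p c k : ℕ) : Set (TPR p c) :=
  {f | (AdjoinRoot.root (X ^ c : (ZMod p)[X])) ^ k * f = 0}

lemma root_pow_mul (k : ℕ) (F : (ZMod p)[X]) :
    (AdjoinRoot.root (X ^ c : (ZMod p)[X])) ^ k * AdjoinRoot.mk _ F
      = AdjoinRoot.mk _ (X ^ k * F) := by
  rw [← AdjoinRoot.mk_X, ← map_pow, ← map_mul]

lemma zero_mem_annSet (k : ℕ) : (0 : TPR p c) ∈ annSet p c k := mul_zero _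

lemma bij_annSet {k : ℕ} (hk : k ≤ c) :
    Function.Bijective (fun F : degreeLT (ZMod p) k =>
      (⟨AdjoinRoot.mk _ (X ^ (c - k) * F.1), by
        show _ * _ = 0
        rw [root_pow_mul, ← mul_assoc, ← pow_add, Nat.add_sub_cancel' hk,
          AdjoinRoot.mk_eq_zero]
        exact ⟨F.1, rfl⟩⟩ : annSet p c k)) := by
  constructor
  · rintro F G h
    have h2 : (X : (ZMod p)[X]) ^ c ∣ X ^ (c - k) * F.1 - X ^ (c - k) * G.1 :=
      AdjoinRoot.mk_eq_mk.1 (congrArg Subtype.val h)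
    obtain ⟨q, hq⟩ := h2
    have hq' : (X : (ZMod p)[X]) ^ (c - k) * (F.1 - G.1) = X ^ (c - k) * (X ^ k * q) := by
      rw [mul_sub, hq, ← mul_assoc, ← pow_add, Nat.sub_add_cancel hk]
    have hdvd : (X : (ZMod p)[X]) ^ k ∣ F.1 - G.1 :=
      ⟨q, mul_left_cancel₀ (pow_ne_zero _ X_ne_zero) hq'⟩
    ext1
    by_contra hne
    have hsub : F.1 - G.1 ≠ 0 := sub_ne_zero.2 hne
    have hd : (F.1 - G.1).degree < k := mem_degreeLT.1 (Submodule.sub_mem _ F.2 G.2)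
    have := Polynomial.degree_le_of_dvd hdvd hsub
    rw [degree_X_pow] at this
    exact absurd (lt_of_le_of_lt this hd) (lt_irrefl _)
  · rintro ⟨f, hf⟩
    by_cases hf0 : f = 0
    · refine ⟨⟨0, by simp [mem_degreeLT]⟩, ?_⟩
      ext
      simp [hf0]
    · have hF : canon f ≠ 0 := canon_ne_zero hf0
      have hmk : AdjoinRoot.mk (X ^ c : (ZMod p)[X]) (canon f) = f := mk_canon f
      have h0 : (AdjoinRoot.root (X ^ c : (ZMod p)[X])) ^ k * f = 0 := hf
      rw [← hmk, root_pow_mul, AdjoinRoot.mk_eq_zero] at h0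
      have h1 : (X : (ZMod p)[X]) ^ k * X ^ (c - k) ∣ X ^ k * canon f := by
        rwa [← pow_add, Nat.add_sub_cancel' hk]
      have h2 : (X : (ZMod p)[X]) ^ (c - k) ∣ canon f :=
        (mul_dvd_mul_iff_left (pow_ne_zero k (X_ne_zero (R := ZMod p)))).1 h1
      obtain ⟨G, hG⟩ := h2
      have hG0 : G ≠ 0 := by
        intro h
        rw [h, mul_zero] at hG
        exact hF hG
      have hdF : (canon f).natDegree < c := by
        have := degree_canon f
        exact natDegree_lt_iff_degree_lt hF |>.2 this
      have hdG : G.natDegree < k := by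
        rw [hG, natDegree_mul (pow_ne_zero _ X_ne_zero) hG0, natDegree_X_pow] at hdF
        omega
      refine ⟨⟨G, mem_degreeLT.2 ((natDegree_lt_iff_degree_lt hG0).1 hdG)⟩, ?_⟩
      ext
      show AdjoinRoot.mk _ (X ^ (c - k) * G) = f
      rw [← hG, hmk]

lemma ncard_annSet {k : ℕ} (hk : k ≤ c) : (annSet p c k).ncard = p ^ k := by
  rw [← Nat.card_coe_set_eq]
  rw [← Nat.card_congr (Equiv.ofBijective _ (bij_annSet hk))]
  rw [Nat.card_congr (degreeLTEquiv (ZMod p) k).toEquiv]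
  simp [Nat.card_eq_fintype_card, ZMod.card]

lemma exists_of_mem_annSet {k : ℕ} (hk : k ≤ c) {f : TPR p c} (hf : f ∈ annSet p c k) :
    ∃ h, f = (AdjoinRoot.root (X ^ c : (ZMod p)[X])) ^ (c - k) * h := by
  obtain ⟨G, hG⟩ := (bij_annSet hk).2 ⟨f, hf⟩
  refine ⟨AdjoinRoot.mk _ G.1, ?_⟩
  rw [root_pow_mul]
  exact (congrArg Subtype.val hG).symm

lemma root_pow_c : (AdjoinRoot.root (X ^ c : (ZMod p)[X])) ^ c = 0 := by
  rw [← AdjoinRoot.mk_X, ← map_pow]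
  exact AdjoinRoot.mk_self

end Helper

section Main

variable {p : ℕ} [Fact p.Prime]

lemma mul_eq_zero_of_mem {b : ℕ} {f g : TPR p (2*b)} (hf : f ∈ annSet p (2*b) b)
    (hg : g ∈ annSet p (2*b) b) : f * g = 0 := by
  obtain ⟨h1, rfl⟩ := exists_of_mem_annSet (by omega) hf
  obtain ⟨h2, rfl⟩ := exists_of_mem_annSet (by omega) hg
  have key : (AdjoinRoot.root (X ^ (2*b) : (ZMod p)[X])) ^ (2*b-b)
      * (AdjoinRoot.root (X ^ (2*b) : (ZMod p)[X])) ^ (2*b-b) = 0 := by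
    rw [← pow_add, show 2*b-b+(2*b-b) = 2*b from by omega, root_pow_c]
  rw [mul_mul_mul_comm, key, zero_mul]

lemma annih_of_adj {b : ℕ} (hb : 1 ≤ b) {f g : TPR p (2*b)} (hfg : f * g = 0)
    (hg : g ≠ 0) (hf : (AdjoinRoot.root (X ^ (2*b) : (ZMod p)[X])) ^ b * f ≠ 0) :
    g ∈ annSet p (2*b) (b-1) := by
  have hf0 : f ≠ 0 := by rintro rfl; exact hf (by rw [mul_zero])
  have hF : canon f ≠ 0 := canon_ne_zero hf0
  have hG : canon g ≠ 0 := canon_ne_zero hg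
  have h1 : ¬ (X : (ZMod p)[X]) ^ (2*b) ∣ X ^ b * canon f := by
    intro h
    apply hf
    rw [← mk_canon f, root_pow_mul, AdjoinRoot.mk_eq_zero]
    exact h
  rw [X_pow_dvd_iff_le (mul_ne_zero (pow_ne_zero _ X_ne_zero) hF),
    natTrailingDegree_mul (pow_ne_zero _ X_ne_zero) hF, natTrailingDegree_X_pow] at h1
  have h2 : AdjoinRoot.mk (X ^ (2*b) : (ZMod p)[X]) (canon f * canon g) = 0 := by
    rw [map_mul, mk_canon, mk_canon, hfg]
  rw [AdjoinRoot.mk_eq_zero, X_pow_dvd_iff_le (mul_ne_zero hF hG),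
    natTrailingDegree_mul hF hG] at h2
  show (AdjoinRoot.root (X ^ (2*b) : (ZMod p)[X])) ^ (b-1) * g = 0
  rw [← mk_canon g, root_pow_mul, AdjoinRoot.mk_eq_zero,
    X_pow_dvd_iff_le (mul_ne_zero (pow_ne_zero _ X_ne_zero) hG),
    natTrailingDegree_mul (pow_ne_zero _ X_ne_zero) hG, natTrailingDegree_X_pow]
  omega

end Main

/-- The set of nonzero zero-divisors of `𝔽_p[x]/(x^c)`. -/
def zd (p c : ℕ) : Set (TPR p c) := {f | f ≠ 0 ∧ ∃ g, g ≠ 0 ∧ f * g = 0}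

/-- The zero-divisor graph of `𝔽_p[x]/(x^c)`: vertices are the nonzero
zero-divisors, and `f ~ g` iff `f ≠ g` and `f * g = 0`. -/
def zdGraph (p c : ℕ) : SimpleGraph (zd p c) where
  Adj a b := a ≠ b ∧ (a : TPR p c) * (b : TPR p c) = 0
  symm := ⟨fun a b h => ⟨h.1.symm, by rw [mul_comm]; exact h.2⟩⟩
  loopless := ⟨fun a h => h.1 rfl⟩

/-- The clique number of the zero-divisor graph of `𝔽_p[x]/(x^(2b))` equals `p^b - 1`. -/
theorem stmt_4 (p b : ℕ) [Fact p.Prime] (hb : 1 ≤ b) :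
    (zdGraph p (2 * b)).cliqueNum = p ^ b - 1 := by
  classical
  letI : Fintype ↥(zd p (2*b)) := Fintype.ofFinite _
  have hb2 : b ≤ 2*b := by omega
  have hCzd : ∀ x ∈ annSet p (2*b) b \ {0}, x ∈ zd p (2*b) := fun x hx =>
    ⟨hx.2, x, hx.2, mul_eq_zero_of_mem hx.1 hx.1⟩
  have hCfin := (annSet p (2*b) b \ {0}).toFinite
  set s : Finset ↥(zd p (2*b)) :=
    hCfin.toFinset.attach.image
      (fun x => ⟨x.1, hCzd x.1 (hCfin.mem_toFinset.1 x.2)⟩) with hs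
  have hinj : Function.Injective (fun x : ↥hCfin.toFinset =>
      (⟨x.1, hCzd x.1 (hCfin.mem_toFinset.1 x.2)⟩ : ↥(zd p (2*b)))) :=
    fun a b h => Subtype.ext (by have := congrArg Subtype.val h; exact this)
  have hcard : s.card = p ^ b - 1 := by
    rw [hs, Finset.card_image_of_injective _ hinj, Finset.card_attach,
      ← Set.ncard_eq_toFinset_card _ hCfin,
      Set.ncard_diff_singleton_of_mem (zero_mem_annSet b), ncard_annSet hb2]
  have hclq : (zdGraph p (2*b)).IsClique ↑s := by
    intro a ha b' hb' hab
    obtain ⟨x, hx, rfl⟩ := Finset.mem_image.1 (Finset.mem_coe.1 ha)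
    obtain ⟨y, hy, rfl⟩ := Finset.mem_image.1 (Finset.mem_coe.1 hb')
    exact (⟨hab, mul_eq_zero_of_mem (hCfin.mem_toFinset.1 x.2).1 (hCfin.mem_toFinset.1 y.2).1⟩ : _ ≠ _ ∧ _)
  have hge : p ^ b - 1 ≤ (zdGraph p (2*b)).cliqueNum := by
    rw [← hcard]
    exact SimpleGraph.IsClique.card_le_cliqueNum (tc := hclq)
  have hle : (zdGraph p (2*b)).cliqueNum ≤ p ^ b - 1 := by
    obtain ⟨t, htc⟩ := (zdGraph p (2*b)).exists_isNClique_cliqueNum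
    rw [← htc.card_eq]
    by_cases hall : ∀ v ∈ t, (v : TPR p (2*b)) ∈ annSet p (2*b) b
    · have hinj2 : Function.Injective (fun v : ↥t =>
          (⟨(v.1 : TPR p (2*b)), ⟨hall v.1 v.2, by simpa using v.1.2.1⟩⟩ :
            ↥(annSet p (2*b) b \ {0}))) :=
        fun a b h => Subtype.ext (Subtype.ext (by have := congrArg Subtype.val h; exact this))
      have hc := Nat.card_le_card_of_injective _ hinj2
      rwa [Nat.card_eq_fintype_card, Fintype.card_coe, Nat.card_coe_set_eq,
        Set.ncard_diff_singleton_of_mem (zero_mem_annSet b), ncard_annSet hb2] at hc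
    · push_neg at hall
      obtain ⟨v, hv, hvann⟩ := hall
      have hstep : ∀ u ∈ t.erase v, (u : TPR p (2*b)) ∈ annSet p (2*b) (b-1) := by
        intro u hu
        have hne : u ≠ v := Finset.ne_of_mem_erase hu
        have hadj := htc.isClique (Finset.mem_coe.2 hv)
          (Finset.mem_coe.2 (Finset.mem_of_mem_erase hu)) (Ne.symm hne)
        exact annih_of_adj hb (hadj : _ ≠ _ ∧ _).2 u.2.1 hvann
      have hinj2 : Function.Injective (fun u : ↥(t.erase v) =>
          (⟨(u.1 : TPR p (2*b)), ⟨hstep u.1 u.2, by simpa using u.1.2.1⟩⟩ :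
            ↥(annSet p (2*b) (b-1) \ {0}))) :=
        fun a b h => Subtype.ext (Subtype.ext (by have := congrArg Subtype.val h; exact this))
      have hc := Nat.card_le_card_of_injective _ hinj2
      rw [Nat.card_eq_fintype_card, Fintype.card_coe, Nat.card_coe_set_eq,
        Set.ncard_diff_singleton_of_mem (zero_mem_annSet _), ncard_annSet (by omega)] at hc
      have hcv : t.card = (t.erase v).card + 1 := (Finset.card_erase_add_one hv).symm
      have hp2 : 2 ≤ p := (Fact.out : p.Prime).two_le
      have hpow : p ^ b = p ^ (b-1) * p := by rw [← pow_succ]; congr 1; omega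
      have hpos : 1 ≤ p ^ (b-1) := Nat.one_le_pow _ _ (by omega)
      have hmul : p ^ (b-1) * 2 ≤ p ^ (b-1) * p := Nat.mul_le_mul_left _ hp2
      omega
  exact le_antisymm hle hge
end
end

section
/- For b ≥ 2, the zero-divisor graph of R = 𝔽_p[x]/(x^{2b}) has diameter 2. -/
open Polynomial

noncomputable section

section aux
variable (p C : ℕ) [Fact p.Prime]

local notation "t" => AdjoinRoot.root (X ^ C : (ZMod p)[X])

lemma tpow (k : ℕ) : (t : TPR p C) ^ k = AdjoinRoot.mk _ (X ^ k) := by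
  rw [map_pow, AdjoinRoot.mk_X]

lemma tpow_eq_zero_iff (k : ℕ) : (t : TPR p C) ^ k = 0 ↔ C ≤ k := by
  rw [tpow, AdjoinRoot.mk_eq_zero,
    pow_dvd_pow_iff Polynomial.X_ne_zero Polynomial.not_isUnit_X]

lemma zd_mul (f : TPR p C) (hf : f ∈ zd p C) : f * t ^ (C - 1) = 0 := by
  obtain ⟨hf0, g, hg0, hfg⟩ := hf
  obtain ⟨F, rfl⟩ := AdjoinRoot.mk_surjective (g := (X ^ C : (ZMod p)[X])) f
  obtain ⟨G, rfl⟩ := AdjoinRoot.mk_surjective (g := (X ^ C : (ZMod p)[X])) g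
  rw [← map_mul, AdjoinRoot.mk_eq_zero] at hfg
  have hXF : X ∣ F := by
    by_contra hX
    exact hg0 (AdjoinRoot.mk_eq_zero.mpr
      (Polynomial.prime_X.pow_dvd_of_dvd_mul_left C hX hfg))
  obtain ⟨F', rfl⟩ := hXF
  have hC : C ≠ 0 := by
    rintro rfl
    exact hf0 (AdjoinRoot.mk_eq_zero.mpr (by simp))
  rw [tpow, ← map_mul, AdjoinRoot.mk_eq_zero]
  obtain ⟨D, rfl⟩ : ∃ D, C = D + 1 :=
    ⟨C - 1, (Nat.succ_pred_eq_of_pos (Nat.pos_of_ne_zero hC)).symm⟩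
  simp only [Nat.add_sub_cancel]
  exact ⟨F', by ring⟩

end aux

/-- For `b ≥ 2`, the zero-divisor graph of `𝔽_p[x]/(x^(2b))` has diameter `2`. -/
theorem stmt_8 (p b : ℕ) [Fact p.Prime] (hb : 2 ≤ b) :
    (zdGraph p (2 * b)).diam = 2 := by
  set C := 2 * b with hCdef
  have hC4 : 4 ≤ C := by omega
  set t : TPR p C := AdjoinRoot.root (X ^ C : (ZMod p)[X]) with ht
  have hpow : ∀ k : ℕ, t ^ k = 0 ↔ C ≤ k := tpow_eq_zero_iff p C
  have hzd : ∀ k : ℕ, 1 ≤ k → k < C → t ^ k ∈ zd p C := by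
    intro k hk1 hk2
    refine ⟨fun h => by rw [hpow] at h; omega, t ^ (C - k),
      fun h => by rw [hpow] at h; omega, ?_⟩
    rw [← pow_add, hpow]; omega
  have h1 : t ^ 1 ∈ zd p C := hzd 1 (by omega) (by omega)
  have h2 : t ^ 2 ∈ zd p C := hzd 2 (by omega) (by omega)
  have hw : t ^ (C - 1) ∈ zd p C := hzd (C - 1) (by omega) (by omega)
  set u : zd p C := ⟨t ^ 1, h1⟩
  set v : zd p C := ⟨t ^ 2, h2⟩
  set w : zd p C := ⟨t ^ (C - 1), hw⟩
  have hne_pow : ∀ j k : ℕ, j < k → k < C → t ^ j ≠ t ^ k := by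
    intro j k hjk hkC he
    have h := congrArg (· * t ^ (C - 1 - j)) he
    simp only [← pow_add] at h
    have hL : t ^ (j + (C - 1 - j)) ≠ 0 := fun h0 => by rw [hpow] at h0; omega
    have hR : t ^ (k + (C - 1 - j)) = 0 := (hpow _).mpr (by omega)
    exact hL (h.trans hR)
  have hwadj : ∀ x : zd p C, x ≠ w → (zdGraph p C).Adj w x := by
    intro x hx
    exact ⟨hx.symm, by rw [mul_comm]; exact zd_mul p C x x.2⟩
  have hedist_le : ∀ x y : zd p C, (zdGraph p C).edist x y ≤ 2 := by
    intro x y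
    by_cases hxy : x = y
    · subst hxy; simp [SimpleGraph.edist_eq_zero_iff.mpr rfl]
    by_cases hxw : x = w
    · subst hxw
      exact le_trans (le_of_eq (SimpleGraph.edist_eq_one_iff_adj.mpr
        (hwadj y (Ne.symm hxy)))) (by norm_num)
    by_cases hyw : y = w
    · subst hyw
      exact le_trans (le_of_eq (SimpleGraph.edist_eq_one_iff_adj.mpr
        ((hwadj x hxw).symm))) (by norm_num)
    refine le_trans (SimpleGraph.edist_le (SimpleGraph.Walk.cons ((hwadj x hxw).symm)
      (SimpleGraph.Walk.cons (hwadj y hyw) SimpleGraph.Walk.nil))) ?_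
    simp
  have huv : u ≠ v := by
    intro h
    exact hne_pow 1 2 (by omega) (by omega) (congrArg Subtype.val h)
  have hnadj : ¬ (zdGraph p C).Adj u v := by
    rintro ⟨-, hmul⟩
    have : t ^ 1 * t ^ 2 = 0 := hmul
    rw [← pow_add, hpow] at this
    omega
  have hedist_uv : (zdGraph p C).edist u v = 2 := by
    refine le_antisymm (hedist_le u v) ?_
    have h0 : (zdGraph p C).edist u v ≠ 0 := fun h =>
      huv (SimpleGraph.edist_eq_zero_iff.mp h)
    have h1' : (zdGraph p C).edist u v ≠ 1 := fun h =>
      hnadj (SimpleGraph.edist_eq_one_iff_adj.mp h)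
    have : (1 : ℕ∞) < (zdGraph p C).edist u v :=
      lt_of_le_of_ne (ENat.one_le_iff_ne_zero.mpr h0) (Ne.symm h1')
    exact Order.add_one_le_of_lt this
  have hediam : (zdGraph p C).ediam = 2 := by
    refine le_antisymm (SimpleGraph.ediam_le_of_edist_le hedist_le) ?_
    rw [← hedist_uv]
    exact SimpleGraph.edist_le_ediam
  rw [SimpleGraph.diam, hediam]
  rfl
end
end

section
/- Let Γ(R) be the zero-divisor graph of R = 𝔽_p[x]/(x^{2b+1}) with b ≥ 1. The independence number of Γ(R) equals p^{2b} − p^b. -/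
open Polynomial

noncomputable section

namespace ZDProof

variable {p c : ℕ} [Fact p.Prime]

lemma mk_canon (f : TPR p c) : AdjoinRoot.mk (X ^ c : (ZMod p)[X]) (canon f) = f := by
  unfold canon
  set q := Function.surjInv (AdjoinRoot.mk_surjective (g := (X ^ c : (ZMod p)[X]))) f with hq
  have h1 : AdjoinRoot.mk (X ^ c : (ZMod p)[X]) q = f := Function.surjInv_eq _ f
  rw [modByMonic_eq_sub_mul_div q (X ^ c), map_sub, map_mul, AdjoinRoot.mk_self,
    zero_mul, sub_zero, h1]

lemma degree_canon_lt (f : TPR p c) : (canon f).degree < c := by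
  have := degree_modByMonic_lt
    (Function.surjInv (AdjoinRoot.mk_surjective (g := (X ^ c : (ZMod p)[X]))) f)
    (monic_X_pow (R := ZMod p) c)
  rwa [degree_X_pow] at this

lemma canon_eq_zero_iff (f : TPR p c) : canon f = 0 ↔ f = 0 := by
  constructor
  · intro h
    rw [← mk_canon f, h, map_zero]
  · intro h
    unfold canon
    rw [modByMonic_eq_zero_iff_dvd (monic_X_pow c), ← AdjoinRoot.mk_eq_zero]
    exact (Function.surjInv_eq _ f).trans h

/-- Uniqueness of representative of degree `< c`. -/
lemma canon_eq_of {f : TPR p c} {h : (ZMod p)[X]} (hmk : AdjoinRoot.mk (X ^ c) h = f)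
    (hdeg : h.degree < c) : canon f = h := by
  have h1 : AdjoinRoot.mk (X ^ c : (ZMod p)[X]) (canon f) = AdjoinRoot.mk (X ^ c) h := by
    rw [mk_canon, hmk]
  rw [AdjoinRoot.mk_eq_mk] at h1
  have h2 : (canon f - h).degree < (X ^ c : (ZMod p)[X]).degree := by
    rw [degree_X_pow]
    exact lt_of_le_of_lt (degree_sub_le _ _) (max_lt (degree_canon_lt f) hdeg)
  have := eq_zero_of_dvd_of_degree_lt h1 h2
  linear_combination (norm := ring_nf) this

lemma mul_eq_zero_iff (f g : TPR p c) :
    f * g = 0 ↔ (X : (ZMod p)[X]) ^ c ∣ canon f * canon g := by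
  have h : f * g = AdjoinRoot.mk (X ^ c) (canon f * canon g) := by
    rw [map_mul, mk_canon, mk_canon]
  rw [h, AdjoinRoot.mk_eq_zero]

/-- Elements whose canonical representative is divisible by `X^m`. -/
def Dset (p c : ℕ) [Fact p.Prime] (m : ℕ) : Set (TPR p c) :=
  {f | (X : (ZMod p)[X]) ^ m ∣ canon f}

lemma card_Dset {m : ℕ} (hm : m ≤ c) : (Dset p c m).ncard = p ^ (c - m) := by
  classical
  set e : degreeLT (ZMod p) (c - m) → TPR p c :=
    fun q => AdjoinRoot.mk (X ^ c) ((X : (ZMod p)[X]) ^ m * q) with he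
  have hdeg : ∀ q : degreeLT (ZMod p) (c - m),
      ((X : (ZMod p)[X]) ^ m * q).degree < c := by
    intro q
    have hq : (q : (ZMod p)[X]).degree < (c - m : ℕ) := mem_degreeLT.1 q.2
    calc ((X : (ZMod p)[X]) ^ m * q).degree ≤ (m : WithBot ℕ) + (q : (ZMod p)[X]).degree := by
          simpa [degree_X_pow] using degree_mul_le ((X : (ZMod p)[X]) ^ m) (q : (ZMod p)[X])
      _ < (m : WithBot ℕ) + ((c - m : ℕ) : WithBot ℕ) :=
          WithBot.add_lt_add_left (by simp) hq
      _ = (c : WithBot ℕ) := by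
          rw [← Nat.cast_add]
          norm_cast
          omega
  have hinj : Function.Injective e := by
    intro q r hqr
    rw [he] at hqr
    simp only at hqr
    rw [AdjoinRoot.mk_eq_mk] at hqr
    have hX : (X : (ZMod p)[X]) ^ c = X ^ m * X ^ (c - m) := by
      rw [← pow_add]; congr 1; omega
    rw [hX, ← mul_sub] at hqr
    have h2 : (X : (ZMod p)[X]) ^ (c - m) ∣ ((q : (ZMod p)[X]) - r) :=
      (mul_dvd_mul_iff_left (pow_ne_zero m (X_ne_zero (R := ZMod p)))).1 hqr
    have h3 : ((q : (ZMod p)[X]) - r).degree < ((X : (ZMod p)[X]) ^ (c - m)).degree := by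
      rw [degree_X_pow]
      exact lt_of_le_of_lt (degree_sub_le _ _) (max_lt (mem_degreeLT.1 q.2) (mem_degreeLT.1 r.2))
    have := eq_zero_of_dvd_of_degree_lt h2 h3
    ext1
    exact sub_eq_zero.1 this
  have hrange : Dset p c m = Set.range e := by
    ext f
    constructor
    · rintro ⟨r, hr⟩
      by_cases hr0 : r = 0
      · refine ⟨⟨0, by simp [Submodule.zero_mem]⟩, ?_⟩
        rw [he]
        simp only [Submodule.coe_zero, mul_zero, map_zero]
        symm
        rw [← canon_eq_zero_iff, hr, hr0, mul_zero]
      · have hdr : (r : (ZMod p)[X]).degree < ((c - m : ℕ) : WithBot ℕ) := by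
          have h1 : (canon f).degree < c := degree_canon_lt f
          rw [hr] at h1
          rw [degree_mul, degree_X_pow] at h1
          rw [degree_eq_natDegree hr0] at h1 ⊢
          norm_cast at h1 ⊢
          omega
        refine ⟨⟨r, mem_degreeLT.2 hdr⟩, ?_⟩
        rw [he]
        simp only
        rw [← hr, mk_canon]
    · rintro ⟨q, rfl⟩
      rw [he]
      simp only
      have : canon (AdjoinRoot.mk (X ^ c) ((X : (ZMod p)[X]) ^ m * (q : (ZMod p)[X]))) =
          (X : (ZMod p)[X]) ^ m * (q : (ZMod p)[X]) := canon_eq_of rfl (hdeg q)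
      exact ⟨(q : (ZMod p)[X]), this⟩
  rw [hrange, ← Nat.card_coe_set_eq, Nat.card_range_of_injective hinj]
  have e1 : Nat.card (degreeLT (ZMod p) (c - m)) = Nat.card (Fin (c - m) → ZMod p) :=
    Nat.card_congr (degreeLTEquiv (ZMod p) (c - m)).toEquiv
  rw [e1, Nat.card_fun, Nat.card_zmod, Nat.card_eq_fintype_card, Fintype.card_fin]

lemma X_pow_mindeg_dvd (f : TPR p c) : (X : (ZMod p)[X]) ^ mindeg f ∣ canon f := by
  rw [X_pow_dvd_iff]
  intro d hd
  exact coeff_eq_zero_of_lt_natTrailingDegree hd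

lemma le_mindeg_of_dvd {f : TPR p c} {m : ℕ} (h0 : f ≠ 0)
    (h : (X : (ZMod p)[X]) ^ m ∣ canon f) : m ≤ mindeg f := by
  have hne : canon f ≠ 0 := fun hcz => h0 ((canon_eq_zero_iff f).1 hcz)
  exact le_natTrailingDegree hne (fun d hd => (X_pow_dvd_iff.1 h) d hd)

lemma mindeg_le {f : TPR p c} (h0 : f ≠ 0) : mindeg f ≤ c - 1 := by
  have hne : canon f ≠ 0 := fun hcz => h0 ((canon_eq_zero_iff f).1 hcz)
  have h1 : (canon f).natDegree < c :=
    (natDegree_lt_iff_degree_lt hne).2 (degree_canon_lt f)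
  have h2 := natTrailingDegree_le_natDegree (canon f)
  unfold mindeg
  omega

lemma mem_zd_iff (hc : 1 ≤ c) (f : TPR p c) :
    f ∈ zd p c ↔ f ≠ 0 ∧ (X : (ZMod p)[X]) ∣ canon f := by
  constructor
  · rintro ⟨h0, g, hg0, hfg⟩
    refine ⟨h0, ?_⟩
    by_contra hnd
    have hdvd : (X : (ZMod p)[X]) ^ c ∣ canon f * canon g := (mul_eq_zero_iff f g).1 hfg
    have h2 : (X : (ZMod p)[X]) ^ c ∣ canon g :=
      (prime_X (R := ZMod p)).pow_dvd_of_dvd_mul_left c hnd hdvd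
    have hgne : canon g ≠ 0 := fun hcz => hg0 ((canon_eq_zero_iff g).1 hcz)
    exact hgne (eq_zero_of_dvd_of_degree_lt h2
      (by rw [degree_X_pow]; exact degree_canon_lt g))
  · rintro ⟨h0, hdvd⟩
    refine ⟨h0, AdjoinRoot.mk (X ^ c) (X ^ (c - 1)), ?_, ?_⟩
    · rw [Ne, AdjoinRoot.mk_eq_zero]
      intro hd
      have : (X : (ZMod p)[X]) ^ (c - 1) = 0 := eq_zero_of_dvd_of_degree_lt hd
        (by rw [degree_X_pow, degree_X_pow]; exact_mod_cast Nat.sub_lt (by omega) one_pos)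
      exact pow_ne_zero _ (X_ne_zero (R := ZMod p)) this
    · have h1 : f * AdjoinRoot.mk (X ^ c) (X ^ (c - 1)) =
          AdjoinRoot.mk (X ^ c) (canon f * X ^ (c - 1)) := by
        rw [map_mul, mk_canon]
      rw [h1, AdjoinRoot.mk_eq_zero]
      have h2 : (X : (ZMod p)[X]) * X ^ (c - 1) ∣ canon f * X ^ (c - 1) :=
        mul_dvd_mul hdvd dvd_rfl
      have h3 : (X : (ZMod p)[X]) * X ^ (c - 1) = X ^ c := by
        rw [← pow_succ']
        congr 1
        omega
      rwa [h3] at h2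


end ZDProof

/-- The independence number of the zero-divisor graph of `𝔽_p[x]/(x^(2b+1))`
equals `p^(2b) - p^b`. -/
theorem stmt_12 (p b : ℕ) [Fact p.Prime] (hb : 1 ≤ b) :
    IsGreatest {n : ℕ | ∃ S : Set (zd p (2 * b + 1)), S.ncard = n ∧
      ∀ u ∈ S, ∀ v ∈ S, ¬ (zdGraph p (2 * b + 1)).Adj u v} (p ^ (2 * b) - p ^ b) := by
  classical
  set c := 2 * b + 1 with hc
  have hc1 : 1 ≤ c := by omega
  have hp2 : 2 ≤ p := (Fact.out : p.Prime).two_le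
  -- basic sets
  set D1 := ZDProof.Dset p c 1 with hD1
  set Db := ZDProof.Dset p c (b + 1) with hDb
  have hDb1 : Db ⊆ D1 := fun f hf => dvd_trans (pow_dvd_pow X (by omega)) hf
  have hcard1 : D1.ncard = p ^ (2 * b) := by
    have h : c - 1 = 2 * b := by omega
    rw [hD1, ZDProof.card_Dset (by omega), h]
  have hcardb : Db.ncard = p ^ b := by
    have h : c - (b + 1) = b := by omega
    rw [hDb, ZDProof.card_Dset (by omega), h]
  have hdiffcard : (D1 \ Db).ncard = p ^ (2 * b) - p ^ b := by
    rw [Set.ncard_diff hDb1 (Set.toFinite Db), hcard1, hcardb]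
  -- elements of D1 \ Db are nonzero zero divisors with mindeg ≤ b
  have hne_of : ∀ f : TPR p c, f ∉ Db → f ≠ 0 := by
    intro f hf h0
    apply hf
    show (X : (ZMod p)[X]) ^ (b + 1) ∣ canon f
    rw [(ZDProof.canon_eq_zero_iff f).2 h0]
    exact dvd_zero _
  have hsub : D1 \ Db ⊆ zd p c := by
    rintro f ⟨h1, h2⟩
    have h0 : f ≠ 0 := hne_of f h2
    have h1' : (X : (ZMod p)[X]) ^ 1 ∣ canon f := h1
    exact (ZDProof.mem_zd_iff hc1 f).2 ⟨h0, by simpa using h1'⟩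
  have hmindeg_le_b : ∀ f : TPR p c, f ∉ Db → mindeg f ≤ b := by
    intro f hf
    by_contra h
    exact hf (dvd_trans (pow_dvd_pow X (by omega)) (ZDProof.X_pow_mindeg_dvd f))
  constructor
  · -- membership : exhibit the independent set
    refine ⟨Subtype.val ⁻¹' (D1 \ Db), ?_, ?_⟩
    · have himg : Subtype.val '' (Subtype.val ⁻¹' (D1 \ Db) : Set (zd p c)) = D1 \ Db := by
        rw [Set.image_preimage_eq_inter_range, Subtype.range_coe]
        exact Set.inter_eq_self_of_subset_left hsub
      have := Set.ncard_image_of_injective (Subtype.val ⁻¹' (D1 \ Db) : Set (zd p c))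
        (Subtype.val_injective (p := fun x => x ∈ zd p c))
      rw [himg] at this
      rw [← this, hdiffcard]
    · rintro u hu v hv (⟨hne, hmul⟩ : _ ≠ _ ∧ _)
      have hu' : (u : TPR p c) ∈ D1 \ Db := hu
      have hv' : (v : TPR p c) ∈ D1 \ Db := hv
      have hu0 : (u : TPR p c) ≠ 0 := hne_of _ hu'.2
      have hv0 : (v : TPR p c) ≠ 0 := hne_of _ hv'.2
      have hcu : canon (u : TPR p c) ≠ 0 := fun h => hu0 ((ZDProof.canon_eq_zero_iff _).1 h)
      have hcv : canon (v : TPR p c) ≠ 0 := fun h => hv0 ((ZDProof.canon_eq_zero_iff _).1 h)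
      have hdvd : (X : (ZMod p)[X]) ^ c ∣ canon (u : TPR p c) * canon (v : TPR p c) :=
        (ZDProof.mul_eq_zero_iff _ _).1 hmul
      have hprodne : canon (u : TPR p c) * canon (v : TPR p c) ≠ 0 := mul_ne_zero hcu hcv
      have hntd : c ≤ (canon (u : TPR p c) * canon (v : TPR p c)).natTrailingDegree :=
        le_natTrailingDegree hprodne (fun d hd => (X_pow_dvd_iff.1 hdvd) d hd)
      rw [natTrailingDegree_mul hcu hcv] at hntd
      have h1 := hmindeg_le_b _ hu'.2
      have h2 := hmindeg_le_b _ hv'.2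
      unfold mindeg at h1 h2
      omega
  · -- upper bound
    rintro n ⟨S, hcard, hind⟩
    set T := Subtype.val '' S with hT
    have hTzd : T ⊆ zd p c := by
      rintro g ⟨u, hu, rfl⟩
      exact u.2
    have hTcard : T.ncard = n := by
      rw [hT, Set.ncard_image_of_injective S (Subtype.val_injective (p := fun x => x ∈ zd p c)),
        hcard]
    have hindep : ∀ g ∈ T, ∀ h ∈ T, g ≠ h → g * h ≠ 0 := by
      rintro g ⟨u, hu, rfl⟩ h ⟨v, hv, rfl⟩ hgh hmul
      exact hind u hu v hv (show u ≠ v ∧ (u : TPR p c) * v = 0 from ⟨fun e => hgh (by rw [e]), hmul⟩)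
    by_cases hcase : ∃ f ∈ T, (X : (ZMod p)[X]) ^ (b + 1) ∣ canon f
    · obtain ⟨f0, hf0T, hf0d⟩ := hcase
      have hf00 : f0 ≠ 0 := (hTzd hf0T).1
      set j := mindeg f0 with hj
      have hj1 : b + 1 ≤ j := ZDProof.le_mindeg_of_dvd hf00 hf0d
      have hj2 : j ≤ 2 * b := by
        have := ZDProof.mindeg_le hf00
        omega
      set m := 2 * b + 1 - j with hm
      have hsubT : T ⊆ insert f0 (D1 \ ZDProof.Dset p c m) := by
        intro g hg
        by_cases hgf : g = f0
        · exact Or.inl hgf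
        right
        have hgzd := hTzd hg
        have hg0 : g ≠ 0 := hgzd.1
        constructor
        · show (X : (ZMod p)[X]) ^ 1 ∣ canon g
          simpa using ((ZDProof.mem_zd_iff hc1 g).1 hgzd).2
        · intro hgm
          have hd1 : (X : (ZMod p)[X]) ^ m * (X : (ZMod p)[X]) ^ j ∣
              canon g * canon f0 := mul_dvd_mul hgm (ZDProof.X_pow_mindeg_dvd f0)
          rw [← pow_add] at hd1
          have hmj : m + j = c := by omega
          rw [hmj] at hd1
          have : g * f0 = 0 := (ZDProof.mul_eq_zero_iff g f0).2 hd1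
          exact hindep g hg f0 hf0T hgf this
      have hdm1 : ZDProof.Dset p c m ⊆ D1 := fun f hf =>
        dvd_trans (pow_dvd_pow X (by omega)) hf
      have hdmcard : (ZDProof.Dset p c m).ncard = p ^ j := by
        have h : c - m = j := by omega
        rw [ZDProof.card_Dset (by omega), h]
      have hcount : n ≤ p ^ (2 * b) - p ^ j + 1 := by
        calc n = T.ncard := hTcard.symm
          _ ≤ (insert f0 (D1 \ ZDProof.Dset p c m)).ncard :=
              Set.ncard_le_ncard hsubT (Set.toFinite _)
          _ ≤ (D1 \ ZDProof.Dset p c m).ncard + 1 := Set.ncard_insert_le _ _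
          _ = p ^ (2 * b) - p ^ j + 1 := by
              rw [Set.ncard_diff hdm1 (Set.toFinite _), hcard1, hdmcard]
      have e1 : p ^ (b + 1) ≤ p ^ j := Nat.pow_le_pow_right (by omega) hj1
      have e2 : p ^ j ≤ p ^ (2 * b) := Nat.pow_le_pow_right (by omega) hj2
      have e3 : 2 * p ^ b ≤ p ^ (b + 1) := by
        rw [pow_succ]
        calc 2 * p ^ b = p ^ b * 2 := by ring
          _ ≤ p ^ b * p := Nat.mul_le_mul_left _ hp2
      have e4 : 1 ≤ p ^ b := Nat.one_le_pow _ _ (by omega)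
      omega
    · push_neg at hcase
      have hsubT : T ⊆ D1 \ Db := by
        intro g hg
        have hgzd := hTzd hg
        constructor
        · show (X : (ZMod p)[X]) ^ 1 ∣ canon g
          simpa using ((ZDProof.mem_zd_iff hc1 g).1 hgzd).2
        · exact hcase g hg
      calc n = T.ncard := hTcard.symm
        _ ≤ (D1 \ Db).ncard := Set.ncard_le_ncard hsubT (Set.toFinite _)
        _ = p ^ (2 * b) - p ^ b := hdiffcard
end
end

section
/- Let G be a connected graph on n vertices with diameter at most 2, with Laplacian eigenvalues λ_1 ≥ … ≥ λ_{n−1} > λ_n = 0. Then the distance Laplacian eigenvalues of G are exactly 2n − λ_{n−1} ≥ 2n − λ_{n−2} ≥ … ≥ 2n − λ_1 together with 0. -/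
noncomputable section

namespace Stmt19Aux
open Finset
open scoped Classical

variable {V : Type*} [Fintype V]

lemma quad_form (w : V → V → ℝ) (hsymm : ∀ u v, w u v = w v u) (x : V → ℝ) :
    2 * ∑ u, x u * ((∑ v, w u v) * x u - ∑ v, w u v * x v) =
      ∑ u, ∑ v, w u v * (x u - x v) ^ 2 := by
  have hS2 : ∑ u : V, ∑ v : V, w u v * x v ^ 2 = ∑ u : V, ∑ v : V, w u v * x u ^ 2 := by
    rw [Finset.sum_comm]
    exact Finset.sum_congr rfl fun u _ => Finset.sum_congr rfl fun v _ => by rw [hsymm]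
  have lhs : ∑ u : V, x u * ((∑ v, w u v) * x u - ∑ v, w u v * x v)
      = ∑ u : V, ((∑ v : V, w u v * x u ^ 2) - ∑ v : V, w u v * (x u * x v)) := by
    refine Finset.sum_congr rfl fun u _ => ?_
    rw [mul_sub, Finset.sum_mul, Finset.mul_sum, Finset.mul_sum]
    congr 1
    · exact Finset.sum_congr rfl fun v _ => by ring
    · exact Finset.sum_congr rfl fun v _ => by ring
  have rhs : ∑ u : V, ∑ v : V, w u v * (x u - x v) ^ 2
      = ∑ u : V, ((∑ v : V, w u v * x u ^ 2) + (∑ v : V, w u v * x v ^ 2)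
          - 2 * ∑ v : V, w u v * (x u * x v)) := by
    refine Finset.sum_congr rfl fun u _ => ?_
    rw [Finset.mul_sum, ← Finset.sum_add_distrib, ← Finset.sum_sub_distrib]
    exact Finset.sum_congr rfl fun v _ => by ring
  rw [lhs, rhs, Finset.sum_sub_distrib, Finset.sum_sub_distrib, Finset.sum_add_distrib, hS2]
  ring_nf
  rw [← Finset.sum_mul]

lemma const_of_quad (w : V → V → ℝ) (hsymm : ∀ u v, w u v = w v u)
    (hnn : ∀ u v, 0 ≤ w u v) (x : V → ℝ)
    (h : ∀ u, (∑ v, w u v) * x u = ∑ v, w u v * x v) :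
    ∀ u v, w u v ≠ 0 → x u = x v := by
  have h0 : ∑ u : V, ∑ v : V, w u v * (x u - x v) ^ 2 = 0 := by
    rw [← quad_form w hsymm x]
    have : ∀ u : V, x u * ((∑ v, w u v) * x u - ∑ v, w u v * x v) = 0 := by
      intro u; rw [h u]; ring
    simp [this]
  intro u v hw
  have h1 : ∀ a ∈ Finset.univ (α := V), (0:ℝ) ≤ ∑ b : V, w a b * (x a - x b) ^ 2 :=
    fun a _ => Finset.sum_nonneg fun b _ => mul_nonneg (hnn a b) (sq_nonneg _)
  have h2 := (Finset.sum_eq_zero_iff_of_nonneg h1).mp h0 u (Finset.mem_univ u)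
  have h3 := (Finset.sum_eq_zero_iff_of_nonneg
    (fun b _ => mul_nonneg (hnn u b) (sq_nonneg _))).mp h2 v (Finset.mem_univ v)
  rcases mul_eq_zero.mp h3 with h | h
  · exact absurd h hw
  · have := pow_eq_zero_iff (n := 2) (by norm_num) |>.mp h
    linarith

end Stmt19Aux

open scoped Classical in
/-- Aouchiche–Hansen: for a connected graph `G` on `n` vertices with diameter at
most `2`, the distance Laplacian eigenvalues are exactly `2n - λ` for each nonzero
Laplacian eigenvalue `λ` (with the same multiplicities), together with the simple
eigenvalue `0`. -/
theorem stmt_19 {V : Type*} [Fintype V] (G : SimpleGraph V)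
    (hconn : G.Connected) (hdiam : ∀ u v : V, G.dist u v ≤ 2)
    (n : ℕ) (hn : n = Fintype.card V)
    (L : Matrix V V ℝ)
    (hLdef : L = Matrix.diagonal (fun v => (G.degree v : ℝ)) - G.adjMatrix ℝ)
    (DL : Matrix V V ℝ)
    (hDLdef : DL = Matrix.diagonal (fun v => ∑ u : V, (G.dist v u : ℝ)) -
      Matrix.of (fun u v => (G.dist u v : ℝ))) :
    Module.finrank ℝ (Module.End.eigenspace DL.mulVecLin (0 : ℝ)) = 1 ∧
    Module.finrank ℝ (Module.End.eigenspace DL.mulVecLin ((2 * n : ℝ))) = 0 ∧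
    (∀ ν : ℝ, ν ≠ 0 → ν ≠ 2 * n →
      Module.finrank ℝ (Module.End.eigenspace DL.mulVecLin ν) =
        Module.finrank ℝ (Module.End.eigenspace L.mulVecLin (2 * n - ν))) := by
  classical
  have hV : Nonempty V := hconn.nonempty
  have hn0 : 0 < n := by rw [hn]; exact Fintype.card_pos
  -- the distance formula for diameter ≤ 2
  have hdist : ∀ u v : V, (G.dist u v : ℝ) =
      2 - 2 * (if u = v then (1:ℝ) else 0) - (if G.Adj u v then (1:ℝ) else 0) := by
    intro u v
    by_cases h : u = v
    · subst h; simp [SimpleGraph.dist_self, G.irrefl]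
    · by_cases ha : G.Adj u v
      · rw [SimpleGraph.dist_eq_one_iff_adj.mpr ha]; norm_num [h, ha]
      · have h1 : G.dist u v = 2 := by
          have hpos := hconn.pos_dist_of_ne h
          have hne1 : G.dist u v ≠ 1 := fun hh => ha (SimpleGraph.dist_eq_one_iff_adj.mp hh)
          have := hdiam u v
          omega
        rw [h1]; simp [h, ha]
  have hsum_adj : ∀ u : V, ∑ v : V, (if G.Adj u v then (1:ℝ) else 0) = G.degree u := by
    intro u
    simp [Finset.sum_boole, SimpleGraph.degree, SimpleGraph.neighborFinset_eq_filter]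
  -- the Laplacian, pointwise
  have hL : ∀ (x : V → ℝ) (u : V),
      L.mulVec x u = (G.degree u : ℝ) * x u - ∑ v : V, (if G.Adj u v then (1:ℝ) else 0) * x v := by
    intro x u
    rw [hLdef, Matrix.sub_mulVec, Pi.sub_apply, Matrix.mulVec_diagonal]
    simp [Matrix.mulVec, dotProduct]
  -- the distance Laplacian, pointwise (raw form)
  have hDLmv : ∀ (x : V → ℝ) (u : V), DL.mulVec x u =
      (∑ v : V, (G.dist u v : ℝ)) * x u - ∑ v : V, (G.dist u v : ℝ) * x v := by
    intro x u
    rw [hDLdef, Matrix.sub_mulVec, Pi.sub_apply, Matrix.mulVec_diagonal]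
    simp [Matrix.mulVec, dotProduct]
  -- transmission
  have hTr : ∀ u : V, ∑ v : V, (G.dist u v : ℝ) = 2 * n - 2 - G.degree u := by
    intro u
    simp only [hdist]
    rw [Finset.sum_sub_distrib, Finset.sum_sub_distrib, hsum_adj u, ← Finset.mul_sum]
    simp [Finset.sum_ite_eq, hn, Finset.card_univ, mul_comm]
  -- the key relation DL = 2n·I − 2J − L, pointwise
  have key : ∀ (x : V → ℝ) (u : V),
      DL.mulVec x u = 2 * n * x u - 2 * (∑ v : V, x v) - L.mulVec x u := by
    intro x u
    rw [hDLmv, hTr u, hL]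
    have h2 : ∑ v : V, (G.dist u v : ℝ) * x v
        = 2 * (∑ v : V, x v) - 2 * x u - ∑ v : V, (if G.Adj u v then (1:ℝ) else 0) * x v := by
      have e : ∀ v : V, (G.dist u v : ℝ) * x v =
          2 * x v - 2 * ((if u = v then (1:ℝ) else 0) * x v)
            - (if G.Adj u v then (1:ℝ) else 0) * x v := by
        intro v; rw [hdist]; ring
      rw [Finset.sum_congr rfl fun v _ => e v, Finset.sum_sub_distrib, Finset.sum_sub_distrib,
        ← Finset.mul_sum, ← Finset.mul_sum]
      congr 2
      simp [ite_mul, Finset.sum_ite_eq]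
    rw [h2]
    ring
  -- sum of (L x) is zero
  have hLsum : ∀ x : V → ℝ, ∑ u : V, L.mulVec x u = 0 := by
    intro x
    simp only [hL]
    rw [Finset.sum_sub_distrib]
    have hswap : ∑ u : V, ∑ v : V, (if G.Adj u v then (1:ℝ) else 0) * x v
        = ∑ u : V, (G.degree u : ℝ) * x u := by
      rw [Finset.sum_comm]
      refine Finset.sum_congr rfl fun v _ => ?_
      rw [← Finset.sum_mul]
      congr 1
      rw [← hsum_adj v]
      exact Finset.sum_congr rfl fun u _ => by simp [SimpleGraph.adj_comm]
    rw [hswap, sub_self]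
  -- kernel of L is constants
  have hLker : ∀ x : V → ℝ, (∀ u, L.mulVec x u = 0) → ∀ u v : V, x u = x v := by
    intro x hx
    have hq := Stmt19Aux.const_of_quad (fun u v => if G.Adj u v then (1:ℝ) else 0)
      (fun u v => by simp [SimpleGraph.adj_comm])
      (fun u v => by by_cases h : G.Adj u v <;> simp [h]) x
      (fun u => by have := hx u; rw [hL] at this; rw [hsum_adj]; linarith)
    have hadj : ∀ u v : V, G.Adj u v → x u = x v := fun u v ha => hq u v (by simp [ha])
    intro u v
    obtain ⟨p⟩ := hconn.preconnected u v
    induction p with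
    | nil => rfl
    | cons h p ih => exact (hadj _ _ h).trans ih
  -- kernel of DL is constants
  have hDLker : ∀ x : V → ℝ, (∀ u, DL.mulVec x u = 0) → ∀ u v : V, x u = x v := by
    intro x hx
    have hq := Stmt19Aux.const_of_quad (fun u v => (G.dist u v : ℝ))
      (fun u v => by rw [SimpleGraph.dist_comm])
      (fun u v => Nat.cast_nonneg _) x
      (fun u => by have := hx u; rw [hDLmv] at this; linarith)
    intro u v
    by_cases h : u = v
    · rw [h]
    · exact hq u v (Nat.cast_ne_zero.mpr (hconn.pos_dist_of_ne h).ne')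
  have hmem : ∀ (μ : ℝ) (x : V → ℝ),
      x ∈ Module.End.eigenspace DL.mulVecLin μ ↔ DL.mulVec x = μ • x := by
    intro μ x
    rw [Module.End.mem_eigenspace_iff, Matrix.mulVecLin_apply]
  have hmemL : ∀ (μ : ℝ) (x : V → ℝ),
      x ∈ Module.End.eigenspace L.mulVecLin μ ↔ L.mulVec x = μ • x := by
    intro μ x
    rw [Module.End.mem_eigenspace_iff, Matrix.mulVecLin_apply]
  obtain ⟨u₀⟩ := hV
  refine ⟨?_, ?_, ?_⟩
  · -- eigenvalue 0 has multiplicity 1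
    have e0 : Module.End.eigenspace DL.mulVecLin (0:ℝ)
        = Submodule.span ℝ {(fun _ => (1:ℝ) : V → ℝ)} := by
      ext x
      rw [hmem]
      constructor
      · intro hx
        have hx' : ∀ u, DL.mulVec x u = 0 := by
          intro u; have := congrFun hx u; simpa using this
        have hc := hDLker x hx'
        have hxeq : x = (x u₀) • (fun _ => (1:ℝ)) := funext fun v => by
          simp [hc v u₀]
        rw [hxeq]
        exact Submodule.smul_mem _ _ (Submodule.mem_span_singleton_self _)
      · intro hx
        obtain ⟨c, rfl⟩ := Submodule.mem_span_singleton.mp hx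
        funext u
        have hrhs : ((0:ℝ) • (c • fun _ => (1:ℝ)) : V → ℝ) u = 0 := by simp
        rw [hrhs, key, hL]
        simp only [Pi.smul_apply, smul_eq_mul, mul_one]
        rw [← Finset.sum_mul, hsum_adj, Finset.sum_const, Finset.card_univ, ← hn, nsmul_eq_mul]
        ring
    rw [e0]
    exact finrank_span_singleton (by
      intro h
      have := congrFun h u₀
      simp at this)
  · -- eigenvalue 2n does not occur
    have e2 : Module.End.eigenspace DL.mulVecLin ((2 * n : ℝ)) = ⊥ := by
      rw [Submodule.eq_bot_iff]
      intro x hx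
      rw [hmem] at hx
      have hLx : ∀ u : V, L.mulVec x u = -2 * (∑ v : V, x v) := by
        intro u
        have h1 := congrFun hx u
        rw [key] at h1
        rw [Pi.smul_apply, smul_eq_mul] at h1
        linarith
      have hS : ∑ v : V, x v = 0 := by
        have h1 := hLsum x
        rw [Finset.sum_congr rfl fun u _ => hLx u, Finset.sum_const, Finset.card_univ, ← hn] at h1
        have hn' : (0:ℝ) < n := by exact_mod_cast hn0
        have : (n : ℝ) * (-2 * ∑ v : V, x v) = 0 := by
          simpa [nsmul_eq_mul] using h1
        rcases mul_eq_zero.mp this with h | h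
        · exact absurd h (by positivity)
        · linarith
      have hLx0 : ∀ u, L.mulVec x u = 0 := fun u => by rw [hLx u, hS]; ring
      have hc := hLker x hLx0
      have hx0 : x u₀ = 0 := by
        have : ∑ v : V, x v = ∑ v : V, x u₀ := Finset.sum_congr rfl fun v _ => hc v u₀
        rw [this, Finset.sum_const, Finset.card_univ, ← hn, nsmul_eq_mul] at hS
        rcases mul_eq_zero.mp hS with h | h
        · exact absurd h (by positivity)
        · exact h
      funext u
      rw [hc u u₀, hx0]; rfl
    rw [e2]
    exact finrank_bot ℝ _
  · -- the remaining eigenvalues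
    intro ν hν0 hν2n
    have e3 : Module.End.eigenspace DL.mulVecLin ν
        = Module.End.eigenspace L.mulVecLin (2 * n - ν) := by
      ext x
      rw [hmem, hmemL]
      constructor
      · intro hx
        have hS : ∑ v : V, x v = 0 := by
          have h1 : ∑ u : V, DL.mulVec x u = ν * ∑ v : V, x v := by
            rw [Finset.sum_congr rfl fun u _ => congrFun hx u]
            simp [Finset.mul_sum]
          have h2 : ∑ u : V, DL.mulVec x u = 0 := by
            rw [Finset.sum_congr rfl fun u _ => key x u]
            rw [Finset.sum_sub_distrib, Finset.sum_sub_distrib, hLsum, ← Finset.mul_sum,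
              Finset.sum_const, Finset.card_univ, ← hn, nsmul_eq_mul]
            ring
          rw [h2] at h1
          rcases mul_eq_zero.mp h1.symm with h | h
          · exact absurd h hν0
          · exact h
        funext u
        have h1 := congrFun hx u
        rw [key, hS] at h1
        rw [Pi.smul_apply, smul_eq_mul] at h1 ⊢
        linarith
      · intro hx
        have hS : ∑ v : V, x v = 0 := by
          have h1 := hLsum x
          rw [Finset.sum_congr rfl fun u _ => congrFun hx u] at h1
          simp only [Pi.smul_apply, smul_eq_mul, ← Finset.mul_sum] at h1
          rcases mul_eq_zero.mp h1 with h | h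
          · exact absurd (by linarith : ν = 2 * n) hν2n
          · exact h
        funext u
        have h1 := congrFun hx u
        rw [Pi.smul_apply, smul_eq_mul] at h1 ⊢
        rw [key, hS, h1]
        ring
    rw [e3]
end
end
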